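/- Continuing the previous setting: for any s ≥ 1, δ ∈ ℝ, and u ≥ 0, sup_{x∈[0,u]} |φ^(s+δ)(x) − φ^(s)(x)| ≤ |δ| u [1 + Lu(1+u)·exp(Lu(1+u/2))], and sup_{x∈[0,u]} |(φ^(s+δ))''(x) − (φ^(s))''(x)| ≤ L(sup_{x∈[0,u]} |φ^(s+δ)(x) − φ^(s)(x)| + sup_{x∈[0,u]} |(φ^(s+δ))'(x) − (φ^(s))'(x)|). -/

import Mathlib

open Set intervalIntegral

/-- Grönwall-type estimate for a second-order ODE perturbation. -/
lemma aux_gronwall10 (L d : ℝ) (hL : 0 ≤ L) (f f' f'' : ℝ → ℝ)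
    (hd1 : ∀ x ∈ Set.Ici (0:ℝ), HasDerivAt f (f' x) x)
    (hd2 : ∀ x ∈ Set.Ici (0:ℝ), HasDerivAt f' (f'' x) x)
    (hc2 : ContinuousOn f'' (Set.Ici 0))
    (hb : ∀ x ∈ Set.Ici (0:ℝ), |f'' x| ≤ L * (|f x| + |f' x|))
    (h0 : f 0 = 0) (h1 : f' 0 = d) :
    ∀ x ∈ Set.Ici (0:ℝ), |f x| ≤ x * (|d| * Real.exp (L * (x + x^2/2))) := by
  have hc1 : ContinuousOn f' (Set.Ici 0) := fun x hx =>
    (hd2 x hx).continuousAt.continuousWithinAt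
  have hmc : Continuous (fun x : ℝ => max x 0) := continuous_id.max continuous_const
  have hmmem : ∀ x : ℝ, max x 0 ∈ Set.Ici (0:ℝ) := fun x => le_max_right x 0
  set g : ℝ → ℝ := fun x => |f' (max x 0)| with hg_def
  have hgc : Continuous g := by
    have : ContinuousOn g Set.univ :=
      (hc1.comp hmc.continuousOn (fun x _ => hmmem x)).abs
    exact continuousOn_univ.mp this
  have hgeq : ∀ x ∈ Set.Ici (0:ℝ), g x = |f' x| := by
    intro x hx
    simp [hg_def, max_eq_left (Set.mem_Ici.mp hx)]
  have hg0 : ∀ x, 0 ≤ g x := fun x => abs_nonneg _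
  set h : ℝ → ℝ := fun x => ∫ t in (0:ℝ)..x, g t with hh_def
  have hhd : ∀ x, HasDerivAt h (g x) x := fun x =>
    (hgc.integral_hasStrictDerivAt 0 x).hasDerivAt
  have hhc : Continuous h := continuous_iff_continuousAt.mpr fun x => (hhd x).continuousAt
  have hPc : Continuous (fun t => h t + g t) := hhc.add hgc
  set P : ℝ → ℝ := fun x => |d| + L * ∫ t in (0:ℝ)..x, (h t + g t) with hP_def
  have hPd : ∀ x, HasDerivAt P (L * (h x + g x)) x := fun x =>
    ((hPc.integral_hasStrictDerivAt 0 x).hasDerivAt.const_mul L).const_add |d|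
  have hPcont : Continuous P := continuous_iff_continuousAt.mpr fun x => (hPd x).continuousAt
  have hsub : ∀ {x : ℝ}, x ∈ Set.Ici (0:ℝ) → Set.uIcc (0:ℝ) x ⊆ Set.Ici 0 := by
    intro x hx
    rw [Set.uIcc_of_le (Set.mem_Ici.mp hx)]
    exact fun t ht => ht.1
  -- |f x| ≤ h x
  have hfle : ∀ x ∈ Set.Ici (0:ℝ), |f x| ≤ h x := by
    intro x hx
    have hftc : ∫ t in (0:ℝ)..x, f' t = f x - f 0 :=
      intervalIntegral.integral_eq_sub_of_hasDerivAt (fun t ht => hd1 t (hsub hx ht))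
        ((hc1.mono (hsub hx)).intervalIntegrable)
    have he : |f x| = |∫ t in (0:ℝ)..x, f' t| := by rw [hftc, h0, sub_zero]
    rw [he]
    calc |∫ t in (0:ℝ)..x, f' t| ≤ ∫ t in (0:ℝ)..x, |f' t| :=
          intervalIntegral.abs_integral_le_integral_abs (Set.mem_Ici.mp hx)
    _ = ∫ t in (0:ℝ)..x, g t := by
          apply intervalIntegral.integral_congr
          intro t ht
          exact (hgeq t (hsub hx ht)).symm
    _ = h x := rfl
  -- g x ≤ P x
  have hgleP : ∀ x ∈ Set.Ici (0:ℝ), g x ≤ P x := by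
    intro x hx
    have hx' : (0:ℝ) ≤ x := Set.mem_Ici.mp hx
    have hftc : ∫ t in (0:ℝ)..x, f'' t = f' x - f' 0 :=
      intervalIntegral.integral_eq_sub_of_hasDerivAt (fun t ht => hd2 t (hsub hx ht))
        ((hc2.mono (hsub hx)).intervalIntegrable)
    have h2 : |∫ t in (0:ℝ)..x, f'' t| ≤ ∫ t in (0:ℝ)..x, |f'' t| :=
      intervalIntegral.abs_integral_le_integral_abs hx'
    have h3 : ∫ t in (0:ℝ)..x, |f'' t| ≤ ∫ t in (0:ℝ)..x, L * (h t + g t) := by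
      apply intervalIntegral.integral_mono_on hx'
      · exact ((hc2.mono (hsub hx)).abs).intervalIntegrable
      · exact (continuous_const.mul hPc).intervalIntegrable 0 x
      · intro t ht
        have ht0 : t ∈ Set.Ici (0:ℝ) := ht.1
        have e1 := hfle t ht0
        have e2 := hgeq t ht0
        have e3 := hb t ht0
        have e4 : |f t| + |f' t| ≤ h t + g t := by rw [e2]; linarith
        calc |f'' t| ≤ L * (|f t| + |f' t|) := e3
        _ ≤ L * (h t + g t) := mul_le_mul_of_nonneg_left e4 hL
    have h4 : ∫ t in (0:ℝ)..x, L * (h t + g t) = L * ∫ t in (0:ℝ)..x, (h t + g t) :=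
      intervalIntegral.integral_const_mul L _
    have h5 : |f' x| ≤ |d| + |∫ t in (0:ℝ)..x, f'' t| := by
      have : f' x = d + ∫ t in (0:ℝ)..x, f'' t := by rw [hftc, h1]; ring
      rw [this]
      exact abs_add_le d _
    have h6 : g x = |f' x| := hgeq x hx
    rw [h6, hP_def]
    simp only []
    linarith [h2, h3, h4.symm ▸ h3]
  -- P monotone on Ici 0
  have hhnn : ∀ x : ℝ, 0 ≤ x → 0 ≤ h x := fun x hx =>
    intervalIntegral.integral_nonneg hx (fun t _ => hg0 t)
  have hPmono : MonotoneOn P (Set.Ici 0) := by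
    apply monotoneOn_of_deriv_nonneg (convex_Ici 0) hPcont.continuousOn
      (fun x _ => (hPd x).differentiableAt.differentiableWithinAt)
    intro x hx
    rw [(hPd x).deriv]
    have hx0 : (0:ℝ) ≤ x := le_of_lt (by simpa using hx)
    exact mul_nonneg hL (add_nonneg (hhnn x hx0) (hg0 x))
  -- h x ≤ x * P x
  have hhle : ∀ x ∈ Set.Ici (0:ℝ), h x ≤ x * P x := by
    intro x hx
    have hx' : (0:ℝ) ≤ x := Set.mem_Ici.mp hx
    calc h x = ∫ t in (0:ℝ)..x, g t := rfl
    _ ≤ ∫ t in (0:ℝ)..x, P t := by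
        apply intervalIntegral.integral_mono_on hx' (hgc.intervalIntegrable 0 x)
          (hPcont.intervalIntegrable 0 x)
        intro t ht
        exact hgleP t ht.1
    _ ≤ ∫ _t in (0:ℝ)..x, P x := by
        apply intervalIntegral.integral_mono_on hx' (hPcont.intervalIntegrable 0 x)
          intervalIntegrable_const
        intro t ht
        exact hPmono (Set.mem_Ici.mpr ht.1) hx ht.2
    _ = x * P x := by rw [intervalIntegral.integral_const]; simp [smul_eq_mul]
  -- Gronwall via exponential multiplier
  have hexp_d : ∀ x : ℝ, HasDerivAt (fun y => Real.exp (-(L * (y + y^2/2))))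
      (Real.exp (-(L * (x + x^2/2))) * (-(L * (1 + x)))) x := by
    intro x
    have h1 : HasDerivAt (fun y : ℝ => y + y^2/2) (1 + x) x := by
      have := (hasDerivAt_id x).add ((hasDerivAt_pow 2 x).div_const 2)
      exact this.congr_deriv (by simp)
    have h2 : HasDerivAt (fun y : ℝ => -(L * (y + y^2/2))) (-(L * (1 + x))) x :=
      (h1.const_mul L).neg
    exact h2.exp
  set R : ℝ → ℝ := fun x => P x * Real.exp (-(L * (x + x^2/2))) with hR_def
  have hRd : ∀ x, HasDerivAt R
      (L * (h x + g x) * Real.exp (-(L * (x + x^2/2)))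
        + P x * (Real.exp (-(L * (x + x^2/2))) * (-(L * (1 + x))))) x :=
    fun x => (hPd x).mul (hexp_d x)
  have hRanti : AntitoneOn R (Set.Ici 0) := by
    apply antitoneOn_of_deriv_nonpos (convex_Ici 0)
      (continuous_iff_continuousAt.mpr fun x => (hRd x).continuousAt).continuousOn
      (fun x _ => (hRd x).differentiableAt.differentiableWithinAt)
    intro x hx
    rw [(hRd x).deriv]
    have hx0 : (0:ℝ) ≤ x := le_of_lt (by simpa using hx)
    have hx' : x ∈ Set.Ici (0:ℝ) := hx0
    have key : L * (h x + g x) ≤ L * (1 + x) * P x := by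
      have e1 := hhle x hx'
      have e2 := hgleP x hx'
      have e4 : h x + g x ≤ x * P x + P x := by linarith
      calc L * (h x + g x) ≤ L * (x * P x + P x) := mul_le_mul_of_nonneg_left e4 hL
      _ = L * (1 + x) * P x := by ring
    have he : (0:ℝ) < Real.exp (-(L * (x + x^2/2))) := Real.exp_pos _
    nlinarith [mul_nonneg (sub_nonneg.mpr key) he.le]
  have hPle : ∀ x ∈ Set.Ici (0:ℝ), P x ≤ |d| * Real.exp (L * (x + x^2/2)) := by
    intro x hx
    have h1 : R x ≤ R 0 := hRanti (Set.mem_Ici.mpr le_rfl) hx (Set.mem_Ici.mp hx)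
    have hR0 : R 0 = |d| := by
      simp [hR_def, hP_def, intervalIntegral.integral_same]
    rw [hR0] at h1
    have h2 := mul_le_mul_of_nonneg_right h1 (Real.exp_pos (L * (x + x^2/2))).le
    calc P x = P x * Real.exp (-(L * (x + x^2/2))) * Real.exp (L * (x + x^2/2)) := by
          rw [mul_assoc, ← Real.exp_add]
          simp
    _ ≤ |d| * Real.exp (L * (x + x^2/2)) := h2
  intro x hx
  calc |f x| ≤ h x := hfle x hx
  _ ≤ x * P x := hhle x hx
  _ ≤ x * (|d| * Real.exp (L * (x + x^2/2))) :=
      mul_le_mul_of_nonneg_left (hPle x hx) (Set.mem_Ici.mp hx)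

/-- Continuing the setting of the Lipschitz Cauchy problem: for any s ≥ 1, δ, and
u ≥ 0, sup_{x∈[0,u]} |φ^(s+δ)(x) − φ^(s)(x)| ≤ |δ| u [1 + Lu(1+u)·exp(Lu(1+u/2))],
and sup_{x∈[0,u]} |(φ^(s+δ))''(x) − (φ^(s))''(x)| ≤
L(sup_{x∈[0,u]} |φ^(s+δ)(x) − φ^(s)(x)| + sup_{x∈[0,u]} |(φ^(s+δ))'(x) − (φ^(s))'(x)|). -/
theorem stmt_10 (L : ℝ) (hL : 0 < L)
    (H : ℝ → ℝ → ℝ → ℝ)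
    (hH : ∀ x x' : ℝ, x ∈ Set.Ici (0:ℝ) → x' ∈ Set.Ici (0:ℝ) → ∀ y y' z z' : ℝ,
      |H x y z - H x' y' z'| ≤ L * (|x - x'| + |y - y'| + |z - z'|))
    (φ φ' φ'' : ℝ → ℝ → ℝ)
    (hd1 : ∀ s ≥ (1:ℝ), ∀ x ∈ Set.Ici (0:ℝ), HasDerivAt (φ s) (φ' s x) x)
    (hd2 : ∀ s ≥ (1:ℝ), ∀ x ∈ Set.Ici (0:ℝ), HasDerivAt (φ' s) (φ'' s x) x)
    (hODE : ∀ s ≥ (1:ℝ), ∀ x ∈ Set.Ici (0:ℝ),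
      φ'' s x + H x (φ s x) (φ' s x) = 0)
    (hinit0 : ∀ s ≥ (1:ℝ), φ s 0 = 0)
    (hinit1 : ∀ s ≥ (1:ℝ), φ' s 0 = s) :
    ∀ s ≥ (1:ℝ), ∀ δ : ℝ, 1 ≤ s + δ → ∀ u ≥ (0:ℝ),
      (∀ x ∈ Set.Icc (0:ℝ) u,
        |φ (s + δ) x - φ s x|
          ≤ |δ| * u * (1 + L * u * (1 + u) * Real.exp (L * u * (1 + u / 2)))) ∧
      (sSup ((fun x => |φ'' (s + δ) x - φ'' s x|) '' Set.Icc (0:ℝ) u)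
        ≤ L * (sSup ((fun x => |φ (s + δ) x - φ s x|) '' Set.Icc (0:ℝ) u)
             + sSup ((fun x => |φ' (s + δ) x - φ' s x|) '' Set.Icc (0:ℝ) u))) := by
  intro s hs δ hδ u hu
  -- basic derivative facts for the difference
  have hd1' : ∀ x ∈ Set.Ici (0:ℝ),
      HasDerivAt (fun y => φ (s + δ) y - φ s y) (φ' (s + δ) x - φ' s x) x :=
    fun x hx => (hd1 _ hδ x hx).sub (hd1 _ hs x hx)
  have hd2' : ∀ x ∈ Set.Ici (0:ℝ),
      HasDerivAt (fun y => φ' (s + δ) y - φ' s y) (φ'' (s + δ) x - φ'' s x) x :=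
    fun x hx => (hd2 _ hδ x hx).sub (hd2 _ hs x hx)
  -- the pointwise bound on the second derivative difference
  have hb' : ∀ x ∈ Set.Ici (0:ℝ), |φ'' (s + δ) x - φ'' s x|
      ≤ L * (|φ (s + δ) x - φ s x| + |φ' (s + δ) x - φ' s x|) := by
    intro x hx
    have e1 := hODE (s + δ) hδ x hx
    have e2 := hODE s hs x hx
    have e3 : φ'' (s + δ) x - φ'' s x
        = H x (φ s x) (φ' s x) - H x (φ (s + δ) x) (φ' (s + δ) x) := by linarith
    rw [e3]
    have e4 := hH x x hx hx (φ s x) (φ (s + δ) x) (φ' s x) (φ' (s + δ) x)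
    have e5 : |x - x| = 0 := by simp
    rw [e5, abs_sub_comm (φ s x), abs_sub_comm (φ' s x)] at e4
    linarith
  -- continuity of the right-hand side of the ODE
  have hHc : ∀ a : ℝ, 1 ≤ a →
      ContinuousOn (fun x => H x (φ a x) (φ' a x)) (Set.Ici 0) := by
    intro a ha x₀ hx₀
    have ca : ContinuousWithinAt (φ a) (Set.Ici 0) x₀ :=
      (hd1 a ha x₀ hx₀).continuousAt.continuousWithinAt
    have cb : ContinuousWithinAt (φ' a) (Set.Ici 0) x₀ :=
      (hd2 a ha x₀ hx₀).continuousAt.continuousWithinAt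
    have goal : Filter.Tendsto (fun t => H t (φ a t) (φ' a t))
        (nhdsWithin x₀ (Set.Ici 0)) (nhds (H x₀ (φ a x₀) (φ' a x₀))) := by
      rw [tendsto_iff_dist_tendsto_zero]
      have hbound : ∀ᶠ t in nhdsWithin x₀ (Set.Ici 0),
          dist (H t (φ a t) (φ' a t)) (H x₀ (φ a x₀) (φ' a x₀))
            ≤ L * (|t - x₀| + |φ a t - φ a x₀| + |φ' a t - φ' a x₀|) := by
        filter_upwards [self_mem_nhdsWithin] with t ht
        rw [Real.dist_eq]
        exact hH t x₀ ht hx₀ _ _ _ _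
      have hnonneg : ∀ᶠ t in nhdsWithin x₀ (Set.Ici 0),
          0 ≤ dist (H t (φ a t) (φ' a t)) (H x₀ (φ a x₀) (φ' a x₀)) :=
        Filter.Eventually.of_forall fun t => dist_nonneg
      have l1 : Filter.Tendsto (fun t : ℝ => |t - x₀|)
          (nhdsWithin x₀ (Set.Ici 0)) (nhds 0) := by
        have h : Filter.Tendsto (fun t : ℝ => |t - x₀|)
            (nhdsWithin x₀ (Set.Ici 0)) (nhds |x₀ - x₀|) :=
          ((continuous_id.sub continuous_const).abs).continuousWithinAt
        simpa using h
      have l2 : Filter.Tendsto (fun t => |φ a t - φ a x₀|)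
          (nhdsWithin x₀ (Set.Ici 0)) (nhds 0) := by
        have h : Filter.Tendsto (fun t => |φ a t - φ a x₀|)
            (nhdsWithin x₀ (Set.Ici 0)) (nhds |φ a x₀ - φ a x₀|) :=
          (ca.sub continuousWithinAt_const).abs
        simpa using h
      have l3 : Filter.Tendsto (fun t => |φ' a t - φ' a x₀|)
          (nhdsWithin x₀ (Set.Ici 0)) (nhds 0) := by
        have h : Filter.Tendsto (fun t => |φ' a t - φ' a x₀|)
            (nhdsWithin x₀ (Set.Ici 0)) (nhds |φ' a x₀ - φ' a x₀|) :=
          (cb.sub continuousWithinAt_const).abs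
        simpa using h
      have hlim := ((l1.add l2).add l3).const_mul L
      simp only [add_zero, mul_zero] at hlim
      exact squeeze_zero' hnonneg hbound hlim
    exact goal
  have hc2' : ContinuousOn (fun x => φ'' (s + δ) x - φ'' s x) (Set.Ici 0) := by
    apply ContinuousOn.congr ((hHc s hs).sub (hHc _ hδ))
    intro x hx
    have e1 := hODE (s + δ) hδ x hx
    have e2 := hODE s hs x hx
    simp only [Pi.sub_apply]
    linarith
  have h0' : (fun y => φ (s + δ) y - φ s y) 0 = 0 := by
    simp [hinit0 _ hδ, hinit0 _ hs]
  have h1' : (fun y => φ' (s + δ) y - φ' s y) 0 = δ := by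
    simp [hinit1 _ hδ, hinit1 _ hs]
  have key := aux_gronwall10 L δ hL.le _ _ _ hd1' hd2' hc2' hb' h0' h1'
  constructor
  · -- first estimate
    intro x hx
    have hx0 : (0:ℝ) ≤ x := hx.1
    have hxu : x ≤ u := hx.2
    have hA : L * (x + x^2/2) ≤ L * (u + u^2/2) := by
      have hx2 : x^2 ≤ u^2 := pow_le_pow_left₀ hx0 hxu 2
      have : x + x^2/2 ≤ u + u^2/2 := by linarith
      exact mul_le_mul_of_nonneg_left this hL.le
    have hk := key x hx0
    have step1 : |φ (s + δ) x - φ s x| ≤ u * (|δ| * Real.exp (L * (u + u^2/2))) := by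
      refine hk.trans ?_
      have e1 : x * (|δ| * Real.exp (L * (x + x^2/2)))
          ≤ u * (|δ| * Real.exp (L * (x + x^2/2))) := by
        apply mul_le_mul_of_nonneg_right hxu
        positivity
      refine e1.trans ?_
      apply mul_le_mul_of_nonneg_left _ hu
      apply mul_le_mul_of_nonneg_left _ (abs_nonneg δ)
      exact Real.exp_le_exp.mpr hA
    have hBe : L * (u + u^2/2) = L * u * (1 + u / 2) := by ring
    rw [hBe] at step1
    set B := L * u * (1 + u / 2) with hB_def
    have h1e : 1 - B ≤ Real.exp (-B) := by linarith [Real.add_one_le_exp (-B)]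
    have h2e : Real.exp B * (1 - B) ≤ 1 := by
      have := mul_le_mul_of_nonneg_left h1e (Real.exp_pos B).le
      rwa [← Real.exp_add, add_neg_cancel, Real.exp_zero] at this
    have h3e : Real.exp B ≤ 1 + B * Real.exp B := by nlinarith
    have hB1 : B ≤ L * u * (1 + u) := by nlinarith [hL.le]
    have h4e : Real.exp B ≤ 1 + L * u * (1 + u) * Real.exp B := by
      nlinarith [Real.exp_pos B]
    refine step1.trans ?_
    calc u * (|δ| * Real.exp B) = |δ| * u * Real.exp B := by ring
    _ ≤ |δ| * u * (1 + L * u * (1 + u) * Real.exp B) :=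
        mul_le_mul_of_nonneg_left h4e (mul_nonneg (abs_nonneg δ) hu)
  · -- second estimate
    have hne : (Set.Icc (0:ℝ) u).Nonempty := ⟨0, le_rfl, hu⟩
    have hIsub : Set.Icc (0:ℝ) u ⊆ Set.Ici 0 := fun t ht => ht.1
    have cf : ContinuousOn (fun x => φ (s + δ) x - φ s x) (Set.Ici 0) :=
      fun x hx => (hd1' x hx).continuousAt.continuousWithinAt
    have cf' : ContinuousOn (fun x => φ' (s + δ) x - φ' s x) (Set.Ici 0) :=
      fun x hx => (hd2' x hx).continuousAt.continuousWithinAt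
    have bdd1 : BddAbove ((fun x => |φ (s + δ) x - φ s x|) '' Set.Icc (0:ℝ) u) :=
      isCompact_Icc.bddAbove_image ((cf.mono hIsub).abs)
    have bdd2 : BddAbove ((fun x => |φ' (s + δ) x - φ' s x|) '' Set.Icc (0:ℝ) u) :=
      isCompact_Icc.bddAbove_image ((cf'.mono hIsub).abs)
    apply csSup_le (hne.image _)
    rintro b ⟨x, hx, rfl⟩
    calc |φ'' (s + δ) x - φ'' s x|
        ≤ L * (|φ (s + δ) x - φ s x| + |φ' (s + δ) x - φ' s x|) := hb' x (hIsub hx)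
    _ ≤ L * (sSup ((fun x => |φ (s + δ) x - φ s x|) '' Set.Icc (0:ℝ) u)
           + sSup ((fun x => |φ' (s + δ) x - φ' s x|) '' Set.Icc (0:ℝ) u)) := by
        apply mul_le_mul_of_nonneg_left _ hL.le
        exact add_le_add (le_csSup bdd1 ⟨x, hx, rfl⟩) (le_csSup bdd2 ⟨x, hx, rfl⟩)
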